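/- Let N = a₁ + ⋯ + a_k be a decomposition of a positive integer into positive integer summands such that 2 does not divide the multinomial coefficient ch(a₁,…,a_k). Then the 2-adic valuations of a₁, …, a_k are pairwise distinct: for i ≠ j, v₂(aᵢ) ≠ v₂(aⱼ). -/

import Mathlib

open Finset

lemma aux_mod (m : ℕ) (hm : m ≠ 0) :
    m % 2 ^ ((m.factorization 2) + 1) = 2 ^ (m.factorization 2) := by
  set v := m.factorization 2
  have h1 : 2 ^ v * (m / 2 ^ v) = m := Nat.ordProj_mul_ordCompl_eq_self m 2
  have h2 : ¬ 2 ∣ m / 2 ^ v := Nat.not_dvd_ordCompl Nat.prime_two hm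
  have h3 : m / 2 ^ v % 2 = 1 := Nat.two_dvd_ne_zero.mp h2
  calc m % 2 ^ (v + 1) = 2 ^ v * (m / 2 ^ v) % (2 ^ v * 2) := by rw [h1, pow_succ]
    _ = 2 ^ v * (m / 2 ^ v % 2) := Nat.mul_mod_mul_left _ _ _
    _ = 2 ^ v := by rw [h3, mul_one]

lemma aux_two_dvd_choose (m n : ℕ) (hm : 0 < m) (hn : 0 < n)
    (h : m.factorization 2 = n.factorization 2) : 2 ∣ (m + n).choose m := by
  set v := m.factorization 2 with hv
  set b := max (v + 2) (Nat.log 2 (n + m) + 1) with hb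
  have hlog : Nat.log 2 (n + m) < b := lt_of_lt_of_le (Nat.lt_succ_self _) (le_max_right _ _)
  have hmul := Nat.Prime.emultiplicity_choose' (n := n) (k := m) Nat.prime_two hlog
  rw [← dvd_iff_emultiplicity_pos]
  have hmem : v + 1 ∈ {i ∈ Ico 1 b | 2 ^ i ≤ m % 2 ^ i + n % 2 ^ i} := by
    rw [mem_filter, mem_Ico]
    refine ⟨⟨Nat.succ_le_succ (Nat.zero_le _), lt_of_lt_of_le (Nat.lt_succ_self _)
      (le_max_left _ _)⟩, ?_⟩
    have hn' : n % 2 ^ (v + 1) = 2 ^ v := by rw [h]; exact aux_mod n hn.ne'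
    rw [aux_mod m hm.ne', ← hv, hn', pow_succ]
    omega
  have hcard : 0 < #{i ∈ Ico 1 b | 2 ^ i ≤ m % 2 ^ i + n % 2 ^ i} :=
    card_pos.mpr ⟨_, hmem⟩
  rw [add_comm m n, hmul]
  exact_mod_cast hcard

lemma aux_choose_dvd_multinomial {k : ℕ} (a : Fin k → ℕ) (i j : Fin k) (hij : i ≠ j) :
    (a i + a j).choose (a i) ∣ Nat.multinomial Finset.univ a := by
  classical
  set s := (univ.erase i).erase j with hs
  have hjmem : j ∈ univ.erase i := mem_erase.mpr ⟨hij.symm, mem_univ j⟩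
  have hj : j ∉ s := notMem_erase _ _
  have hi : i ∉ univ.erase i := notMem_erase _ _
  have h1 : insert j s = univ.erase i := insert_erase hjmem
  have h2 : insert i (univ.erase i) = (univ : Finset (Fin k)) := insert_erase (mem_univ i)
  set S := ∑ l ∈ s, a l with hS
  have e1 : Nat.multinomial univ a
      = (a i + (a j + S)).choose (a i) * ((a j + S).choose (a j) * Nat.multinomial s a) := by
    rw [← h2, Nat.multinomial_insert hi, ← h1, Nat.multinomial_insert hj,
      sum_insert hj]
  have key : (a i + a j + S).choose (a i + a j) * (a i + a j).choose (a i)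
      = (a i + a j + S).choose (a i) * (a j + S).choose (a j) := by
    have := Nat.choose_mul (n := a i + a j + S) (k := a i + a j) (s := a i)
      (Nat.le_add_right _ _)
    simpa [Nat.add_sub_cancel_left, show a i + a j + S - a i = a j + S by omega] using this
  rw [e1, ← mul_assoc, show a i + (a j + S) = a i + a j + S by ring, ← key]
  exact Dvd.dvd.mul_right (Dvd.intro_left _ rfl) _

theorem stmt_8 (k : ℕ) (N : ℕ) (hN : 0 < N) (a : Fin k → ℕ) (hpos : ∀ i, 0 < a i)
    (hsum : ∑ i, a i = N) (h2 : ¬ 2 ∣ Nat.multinomial Finset.univ a) :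
    ∀ i j, i ≠ j → (a i).factorization 2 ≠ (a j).factorization 2 := by
  intro i j hij heq
  exact h2 ((aux_two_dvd_choose (a i) (a j) (hpos i) (hpos j) heq).trans
    (aux_choose_dvd_multinomial a i j hij))
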